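/- Let (μ_n) and μ be finite measures on a metric space with μ_n → μ vaguely (i.e., μ_n[F] → μ[F] for all continuous bounded F supported away from a distinguished point 0 in the sense that F vanishes on {d(0, ·) < ε} for some ε > 0), and suppose μ_n(S) → μ(S) < ∞. Then lim_{ε→0} limsup_{n→∞} μ_n({d(0,·) ≤ ε}) ≤ μ({0}). -/

import Mathlib

open MeasureTheory Filter Topology

/-- Mass-escape estimate (inequality (3.1)): under vague convergence away from the
distinguished point `z` plus convergence of total masses, the mass near `z`
asymptotically does not exceed the atom of the limit at `z`. -/
theorem stmt_9 {S : Type*} [MeasurableSpace S] [MetricSpace S] [BorelSpace S]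
    (z : S) (μN : ℕ → Measure S) (μ : Measure S)
    [∀ n, IsFiniteMeasure (μN n)] [IsFiniteMeasure μ]
    (hvague : ∀ F : S → ℝ, Continuous F → (∃ M : ℝ, ∀ x, |F x| ≤ M) →
      (∃ ε > (0 : ℝ), ∀ x, dist z x < ε → F x = 0) →
      Tendsto (fun n => ∫ x, F x ∂(μN n)) atTop (𝓝 (∫ x, F x ∂μ)))
    (hmass : Tendsto (fun n => ((μN n) Set.univ).toReal) atTop
      (𝓝 ((μ Set.univ).toReal))) :
    ⨅ (ε : ℝ) (_ : 0 < ε),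
        Filter.limsup (fun n => (μN n) (Metric.closedBall z ε)) atTop
      ≤ μ {z} := by
  refine ENNReal.le_of_forall_pos_le_add (fun η hη _ => ?_)
  -- choose ε' > 0 with μ (closedBall z ε') ≤ μ {z} + η
  have h1 : Tendsto (fun r : ℝ => μ (Metric.cthickening r {z})) (𝓝[>] 0)
      (𝓝 (μ {z})) := by
    exact tendsto_measure_cthickening_of_isClosed (μ := μ)
      ⟨1, one_pos, (measure_lt_top μ _).ne⟩ isClosed_singleton
      |>.mono_left nhdsWithin_le_nhds
  have hlt : μ {z} < μ {z} + η :=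
    ENNReal.lt_add_right (measure_ne_top μ _) (by exact_mod_cast hη.ne')
  obtain ⟨ε', hε', hε'mem⟩ :=
    ((h1.eventually_lt_const hlt).and self_mem_nhdsWithin).exists
  have hε'pos : (0 : ℝ) < ε' := hε'mem
  rw [Metric.cthickening_singleton z hε'pos.le] at hε'
  set ε : ℝ := ε' / 2 with hεdef
  have hεpos : 0 < ε := by positivity
  -- the bump function
  set F : S → ℝ := fun x => max 0 (min 1 ((dist z x - ε) / ε)) with hFdef
  have hFc : Continuous F := by
    apply continuous_const.max (continuous_const.min _)
    exact ((continuous_const.dist continuous_id).sub continuous_const).div_const _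
  have hF0 : ∀ x, F x ≥ 0 := fun x => le_max_left _ _
  have hF1 : ∀ x, F x ≤ 1 := fun x => max_le zero_le_one (min_le_left _ _)
  have hFzero : ∀ x, dist z x ≤ ε → F x = 0 := by
    intro x hx
    have ht : (dist z x - ε) / ε ≤ 0 := div_nonpos_of_nonpos_of_nonneg (by linarith) hεpos.le
    simp only [hFdef]
    rw [min_eq_right (ht.trans zero_le_one), max_eq_left ht]
  have hFone : ∀ x, ε' ≤ dist z x → F x = 1 := by
    intro x hx
    have ht : (1 : ℝ) ≤ (dist z x - ε) / ε := by
      rw [le_div_iff₀ hεpos]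
      simp only [hεdef]; linarith
    simp only [hFdef]
    rw [min_eq_left ht, max_eq_right zero_le_one]
  have hFint : ∀ ν : Measure S, IsFiniteMeasure ν → Integrable F ν := by
    intro ν hν
    refine (integrable_const (1 : ℝ)).mono' hFc.aestronglyMeasurable ?_
    exact .of_forall fun x => by
      rw [Real.norm_eq_abs, abs_le]; exact ⟨by linarith [hF0 x], hF1 x⟩
  -- bound A
  have hA : ∀ n, ((μN n) (Metric.closedBall z ε)).toReal ≤
      ((μN n) Set.univ).toReal - ∫ x, F x ∂(μN n) := by
    intro n
    have hint : ∫ x, (Metric.closedBall z ε).indicator (fun _ => (1 : ℝ)) x ∂(μN n)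
        ≤ ∫ x, (1 - F x) ∂(μN n) := by
      refine integral_mono ((integrable_const 1).indicator Metric.isClosed_closedBall.measurableSet)
        ((integrable_const 1).sub (hFint _ inferInstance)) (fun x => ?_)
      by_cases hx : x ∈ Metric.closedBall z ε
      · rw [Set.indicator_of_mem hx]
        have := hFzero x (by rw [dist_comm]; exact Metric.mem_closedBall.1 hx)
        simp [this]
      · rw [Set.indicator_of_notMem hx]
        linarith [hF1 x]
    have heq : ∫ x, (Metric.closedBall z ε).indicator (fun _ => (1 : ℝ)) x ∂(μN n)
        = ((μN n) (Metric.closedBall z ε)).toReal := by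
      exact integral_indicator_one (μ := μN n) Metric.isClosed_closedBall.measurableSet
    have heq2 : ∫ x, (1 - F x) ∂(μN n)
        = ((μN n) Set.univ).toReal - ∫ x, F x ∂(μN n) := by
      rw [integral_sub (integrable_const 1) (hFint _ inferInstance), integral_const,
        smul_eq_mul, mul_one]
      rfl
    rw [heq, heq2] at hint
    exact hint
  -- bound B
  have hB : (μ Set.univ).toReal - ∫ x, F x ∂μ ≤ (μ (Metric.closedBall z ε')).toReal := by
    have hint : ∫ x, (Metric.ball z ε')ᶜ.indicator (fun _ => (1 : ℝ)) x ∂μ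
        ≤ ∫ x, F x ∂μ := by
      refine integral_mono ((integrable_const 1).indicator
        Metric.isOpen_ball.measurableSet.compl) (hFint _ inferInstance) (fun x => ?_)
      by_cases hx : x ∈ (Metric.ball z ε')ᶜ
      · rw [Set.indicator_of_mem hx]
        have hd : ε' ≤ dist z x := by
          rw [dist_comm]; simpa [Metric.mem_ball] using hx
        rw [hFone x hd]
      · rw [Set.indicator_of_notMem hx]; exact hF0 x
    have heq : ∫ x, (Metric.ball z ε')ᶜ.indicator (fun _ => (1 : ℝ)) x ∂μ
        = (μ (Metric.ball z ε')ᶜ).toReal := by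
      exact integral_indicator_one (μ := μ) Metric.isOpen_ball.measurableSet.compl
    have hcompl : (μ (Metric.ball z ε')ᶜ).toReal
        = (μ Set.univ).toReal - (μ (Metric.ball z ε')).toReal := by
      rw [measure_compl Metric.isOpen_ball.measurableSet (measure_ne_top μ _),
        ENNReal.toReal_sub_of_le (measure_mono (Set.subset_univ _)) (measure_ne_top μ _)]
    have hmono : (μ (Metric.ball z ε')).toReal ≤ (μ (Metric.closedBall z ε')).toReal :=
      ENNReal.toReal_mono (measure_ne_top μ _) (measure_mono Metric.ball_subset_closedBall)
    rw [heq, hcompl] at hint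
    linarith
  -- convergence of the upper bound
  have hF0near : ∃ δ > (0 : ℝ), ∀ x, dist z x < δ → F x = 0 :=
    ⟨ε, hεpos, fun x hx => hFzero x hx.le⟩
  have hFtend := hvague F hFc ⟨1, fun x => abs_le.2 ⟨by linarith [hF0 x], hF1 x⟩⟩ hF0near
  have hg : Tendsto (fun n => ((μN n) Set.univ).toReal - ∫ x, F x ∂(μN n)) atTop
      (𝓝 ((μ Set.univ).toReal - ∫ x, F x ∂μ)) := hmass.sub hFtend
  -- put everything together
  have key : Filter.limsup (fun n => (μN n) (Metric.closedBall z ε)) atTop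
      ≤ μ {z} + η := by
    calc Filter.limsup (fun n => (μN n) (Metric.closedBall z ε)) atTop
        ≤ Filter.limsup (fun n => ENNReal.ofReal
            (((μN n) Set.univ).toReal - ∫ x, F x ∂(μN n))) atTop := by
          refine Filter.limsup_le_limsup (.of_forall fun n => ?_)
          simp only
          rw [← ENNReal.ofReal_toReal (measure_ne_top (μN n) (Metric.closedBall z ε))]
          exact ENNReal.ofReal_le_ofReal (hA n)
      _ = ENNReal.ofReal ((μ Set.univ).toReal - ∫ x, F x ∂μ) :=
          ((ENNReal.tendsto_ofReal hg).limsup_eq)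
      _ ≤ μ {z} + η := by
          refine le_trans ?_ hε'.le
          rw [← ENNReal.ofReal_toReal (measure_ne_top μ (Metric.closedBall z ε'))]
          exact ENNReal.ofReal_le_ofReal hB
  exact le_trans (iInf_le_of_le ε (iInf_le_of_le hεpos le_rfl)) key
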